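/- Let n ≥ 2 with |n| < 1 and let f(z) = z^n − z over K. Then I(f) = |n|^{-1/(n-1)}; that is, f attains the optimal bound of the non-archimedean Sendov theorem: the maximum over roots z of f of the minimum over roots w of f' of |z − w| equals |n|^{-1/(n-1)}. -/

import Mathlib

open Polynomial

/-- `I(f) = max_{z : f(z)=0} min_{w : f'(w)=0} |z - w|`, expressed via `sSup`/`sInf`
(for the polynomials appearing in the statements these sets are finite and nonempty,
so `sSup`/`sInf` are the maximum/minimum). -/
noncomputable def sendovI {K : Type*} [Field K] (v : AbsoluteValue K ℝ)
    (f : Polynomial K) : ℝ :=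
  sSup ((fun z => sInf ((fun w => v (z - w)) '' {w : K | (Polynomial.derivative f).IsRoot w})) ''
    {z : K | f.IsRoot z})

/-- For `n ≥ 2` with `|n| < 1`, the polynomial `f(z) = z^n - z` attains the optimal bound
of the non-archimedean Sendov theorem: `I(f) = |n|^{-1/(n-1)}`. -/
theorem pow_sub_X_attains_optimal_bound {K : Type*} [Field K] [IsAlgClosed K] [CharZero K]
    (v : AbsoluteValue K ℝ) (hna : IsNonarchimedean v)
    (n : ℕ) (hn : 2 ≤ n) (hsmall : v ((n : K)) < 1) :
    sendovI v (Polynomial.X ^ n - Polynomial.X : Polynomial K)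
      = v ((n : K)) ^ (-(1 / ((n : ℝ) - 1))) := by
  have hn0 : n ≠ 0 := by omega
  have hnK : (n : K) ≠ 0 := Nat.cast_ne_zero.mpr hn0
  set c := v ((n : K)) with hc
  have hc0 : 0 < c := v.pos hnK
  set r : ℝ := c ^ (-(1 / ((n : ℝ) - 1))) with hr
  have hnR : (2 : ℝ) ≤ (n : ℝ) := by exact_mod_cast hn
  have hexp : 0 < 1 / ((n : ℝ) - 1) := by
    apply div_pos one_pos; linarith
  have hr1 : 1 < r := by
    rw [hr]
    exact (Real.one_lt_rpow_iff_of_pos hc0).mpr (Or.inr ⟨hsmall, by linarith⟩)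
  -- value of roots of derivative
  have hwval : ∀ w : K,
      (Polynomial.derivative (Polynomial.X ^ n - Polynomial.X : Polynomial K)).IsRoot w →
      v w = r := by
    intro w hw
    have heq : (n : K) * w ^ (n - 1) = 1 := by
      have := hw
      simp only [Polynomial.IsRoot, Polynomial.derivative_sub, Polynomial.derivative_X_pow,
        Polynomial.derivative_X, Polynomial.eval_sub, Polynomial.eval_mul, Polynomial.eval_pow,
        Polynomial.eval_X, Polynomial.eval_one, Polynomial.eval_natCast,
        Polynomial.eval_C] at this
      exact sub_eq_zero.mp this
    have h1 : c * (v w) ^ (n - 1) = 1 := by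
      have := congrArg v heq
      simpa [map_mul, map_pow] using this
    have hvw0 : 0 < v w := by
      rcases (v.nonneg w).eq_or_lt.imp Eq.symm id with h | h
      · exfalso
        rw [h, zero_pow (show n - 1 ≠ 0 by omega), mul_zero] at h1
        exact one_ne_zero h1.symm
      · exact h
    have hcast : ((n - 1 : ℕ) : ℝ) = (n : ℝ) - 1 := by
      push_cast [Nat.cast_sub (show 1 ≤ n by omega)]; ring
    have h2 : (v w) ^ ((n : ℝ) - 1) = c⁻¹ := by
      rw [← hcast, Real.rpow_natCast]
      field_simp
      linarith [h1]
    have h3 : v w = ((v w) ^ ((n : ℝ) - 1)) ^ (1 / ((n : ℝ) - 1)) := by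
      rw [← Real.rpow_mul hvw0.le, mul_one_div,
        div_self (by linarith : (n : ℝ) - 1 ≠ 0), Real.rpow_one]
    rw [h3, h2, hr, Real.inv_rpow hc0.le, ← Real.rpow_neg hc0.le]
  -- value of roots of f
  have hzval : ∀ z : K, (Polynomial.X ^ n - Polynomial.X : Polynomial K).IsRoot z →
      v z ≤ 1 := by
    intro z hz
    have hev : z ^ n = z := by
      have := hz
      simp only [Polynomial.IsRoot, Polynomial.eval_sub, Polynomial.eval_pow,
        Polynomial.eval_X] at this
      exact sub_eq_zero.mp this
    by_contra h
    push_neg at h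
    have h2 : v z < (v z) ^ n := by
      calc v z = (v z) ^ 1 := (pow_one _).symm
        _ < (v z) ^ n := pow_lt_pow_right₀ h (by omega)
    have h3 : (v z) ^ n = v z := by rw [← map_pow, hev]
    linarith
  -- ultrametric: v z < v w → v (z - w) = v w
  have hkey : ∀ z w : K, v z < v w → v (z - w) = v w := by
    intro z w h
    have h1 : v (z - w) ≤ v w := by
      have h2 := hna z (-w)
      rw [← sub_eq_add_neg] at h2
      simpa [max_le_iff] using h2.trans (max_le h.le (by simp))
    refine le_antisymm h1 ?_
    have h3 : v w ≤ max (v z) (v (z - w)) := by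
      have h4 := hna z (-(z - w))
      rw [show z + -(z - w) = w from by ring, v.map_neg] at h4
      exact h4
    rcases le_max_iff.mp h3 with h5 | h5
    · exact absurd h5 (not_le.mpr h)
    · exact h5
  -- the inner set is always {r}
  obtain ⟨w0, hw0⟩ := IsAlgClosed.exists_pow_nat_eq ((n : K)⁻¹) (show 0 < n - 1 by omega)
  have hw0root : (Polynomial.derivative (Polynomial.X ^ n - Polynomial.X : Polynomial K)).IsRoot w0 := by
    simp only [Polynomial.IsRoot, Polynomial.derivative_sub, Polynomial.derivative_X_pow,
      Polynomial.derivative_X, Polynomial.eval_sub, Polynomial.eval_mul, Polynomial.eval_pow,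
      Polynomial.eval_X, Polynomial.eval_one, Polynomial.eval_natCast, Polynomial.eval_C]
    rw [hw0, mul_inv_cancel₀ hnK, sub_self]
  have hS : ∀ z : K, (Polynomial.X ^ n - Polynomial.X : Polynomial K).IsRoot z →
      ((fun w => v (z - w)) ''
        {w : K | (Polynomial.derivative (Polynomial.X ^ n - Polynomial.X : Polynomial K)).IsRoot w})
        = {r} := by
    intro z hz
    apply Set.eq_singleton_iff_unique_mem.mpr
    constructor
    · refine ⟨w0, hw0root, ?_⟩
      have hlt : v z < v w0 := by
        rw [hwval w0 hw0root]; exact lt_of_le_of_lt (hzval z hz) hr1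
      show v (z - w0) = r
      rw [hkey z w0 hlt, hwval w0 hw0root]
    · rintro x ⟨w, hw, rfl⟩
      have hlt : v z < v w := by
        rw [hwval w hw]; exact lt_of_le_of_lt (hzval z hz) hr1
      show v (z - w) = r
      rw [hkey z w hlt, hwval w hw]
  -- finish
  have h0root : (Polynomial.X ^ n - Polynomial.X : Polynomial K).IsRoot 0 := by
    simp [Polynomial.IsRoot, zero_pow hn0]
  unfold sendovI
  have houter : ((fun z => sInf ((fun w => v (z - w)) ''
      {w : K | (Polynomial.derivative (Polynomial.X ^ n - Polynomial.X : Polynomial K)).IsRoot w})) ''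
      {z : K | (Polynomial.X ^ n - Polynomial.X : Polynomial K).IsRoot z}) = {r} := by
    apply Set.eq_singleton_iff_unique_mem.mpr
    constructor
    · refine ⟨0, h0root, ?_⟩
      show sInf ((fun w => v ((0 : K) - w)) ''
        {w : K | (Polynomial.derivative (Polynomial.X ^ n - Polynomial.X : Polynomial K)).IsRoot w}) = r
      rw [hS 0 h0root, csInf_singleton]
    · rintro x ⟨z, hz, rfl⟩
      show sInf ((fun w => v (z - w)) ''
        {w : K | (Polynomial.derivative (Polynomial.X ^ n - Polynomial.X : Polynomial K)).IsRoot w}) = r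
      rw [hS z hz, csInf_singleton]
  rw [houter, csSup_singleton]
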